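/- For every nonnegative integer n, p(7n+5) ≡ 0 (mod 7). -/

import Mathlib

namespace RamaJacobi
open Polynomial Finset

noncomputable section

local notation "R" => Polynomial ℤ
local notation "q" => (Polynomial.X : Polynomial ℤ)
local notation "A" => Polynomial (Polynomial ℤ)
local notation "Y" => (Polynomial.X : Polynomial (Polynomial ℤ))
local notation "CC" => (Polynomial.C : Polynomial ℤ →+* Polynomial (Polynomial ℤ))

/-- Gaussian binomial coefficients via the q-Pascal rule. -/
def qb : ℕ → ℕ → R
  | 0, 0 => 1
  | 0, _+1 => 0
  | _+1, 0 => 1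
  | n+1, k+1 => qb n (k+1) + q ^ (n-k) * qb n k

@[simp] lemma qb_zero_right (n : ℕ) : qb n 0 = 1 := by cases n <;> rfl

lemma qb_eq_zero : ∀ {n k : ℕ}, n < k → qb n k = 0 := by
  intro n
  induction n with
  | zero => intro k hk; match k, hk with | k+1, _ => rfl
  | succ n ih =>
    intro k hk
    match k, hk with
    | k+1, hk =>
      show qb n (k+1) + q ^ (n-k) * qb n k = 0
      rw [ih (by omega), ih (by omega), mul_zero, add_zero]

@[simp] lemma qb_diag (n : ℕ) : qb n n = 1 := by
  induction n with
  | zero => rfl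
  | succ n ih =>
    show qb n (n+1) + q ^ (n-n) * qb n n = 1
    rw [qb_eq_zero (by omega), ih, Nat.sub_self, pow_zero, one_mul, zero_add]

lemma qb_one (n : ℕ) : qb n 1 = ∑ i ∈ range n, q ^ i := by
  induction n with
  | zero => rfl
  | succ n ih =>
    show qb n 1 + q ^ (n - 0) * qb n 0 = _
    rw [ih, qb_zero_right, Nat.sub_zero, mul_one, Finset.sum_range_succ]

lemma qb_pascal1 (n k : ℕ) : qb (n+1) (k+1) = qb n (k+1) + q ^ (n-k) * qb n k := rfl

lemma qb_pascal2 : ∀ n k : ℕ, qb (n+1) (k+1) = q ^ (k+1) * qb n (k+1) + qb n k := by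
  intro n
  induction n with
  | zero =>
    intro k
    cases k with
    | zero => simp [qb]
    | succ k =>
      show qb 0 (k+2) + q ^ (0-(k+1)) * qb 0 (k+1) = q ^ (k+2) * qb 0 (k+2) + qb 0 (k+1)
      rw [show qb 0 (k+2) = 0 from rfl, show qb 0 (k+1) = 0 from rfl]
      ring
  | succ n ih =>
    intro k
    cases k with
    | zero =>
      show qb (n+1) 1 + q ^ (n+1-0) * qb (n+1) 0 = q ^ 1 * qb (n+1) 1 + qb (n+1) 0
      rw [qb_zero_right, qb_one, Nat.sub_zero, mul_one, pow_one, Finset.mul_sum]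
      rw [Finset.sum_range_succ']
      simp only [← pow_succ']
      rw [Finset.sum_range_succ]
      ring
    | succ k =>
      rcases lt_trichotomy k n with hkn | heq | hkn
      · -- k < n
        obtain ⟨d, rfl⟩ : ∃ d, n = k + 1 + d := ⟨n - k - 1, by omega⟩
        have hR : q ^ (k+2) * qb (k+1+d+1) (k+2) + qb (k+1+d+1) (k+1)
            = q ^ (k+2) * (qb (k+1+d) (k+2) + q ^ d * qb (k+1+d) (k+1))
              + (qb (k+1+d) (k+1) + q ^ (d+1) * qb (k+1+d) k) := by
          rw [qb_pascal1 (k+1+d) (k+1), qb_pascal1 (k+1+d) k,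
            show k+1+d-(k+1) = d from by omega, show k+1+d-k = d+1 from by omega]
        rw [hR]
        show qb (k+1+d+1) (k+2) + q ^ (k+1+d+1-(k+1)) * qb (k+1+d+1) (k+1) = _
        rw [ih (k+1), ih k, show k+1+d+1-(k+1) = d+1 from by omega]
        ring
      · -- k = n
        subst heq
        rw [qb_diag, qb_eq_zero (show k+1 < k+2 from by omega), qb_diag]
        ring
      · -- n < k
        rw [qb_eq_zero (show n+1+1 < k+1+1 from by omega),
          qb_eq_zero (show n+1 < k+1+1 from by omega),
          qb_eq_zero (show n+1 < k+1 from by omega)]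
        ring

/-- partial products of (1 - q^i) starting above a. -/
def prodI (a k : ℕ) : R := ∏ i ∈ range k, (1 - q ^ (a+1+i))

def f (m : ℕ) : R := ∏ i ∈ range m, (1 - q ^ (i+1))

lemma prodI_zero_left (m : ℕ) : prodI 0 m = f m := by
  unfold prodI f
  exact Finset.prod_congr rfl fun i _ => by rw [show 0+1+i = i+1 from by omega]

lemma f_add (a k : ℕ) : f (a + k) = f a * prodI a k := by
  unfold f prodI
  rw [Finset.prod_range_add]
  congr 1
  exact Finset.prod_congr rfl fun i _ => by rw [show a+i+1 = a+1+i from by omega]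

lemma prodI_succ (a k : ℕ) : prodI a (k+1) = prodI a k * (1 - q ^ (a+1+k)) :=
  Finset.prod_range_succ _ _

lemma prodI_succ' (a k : ℕ) : prodI a (k+1) = (1 - q ^ (a+1)) * prodI (a+1) k := by
  unfold prodI
  rw [Finset.prod_range_succ', mul_comm, show a+1+0 = a+1 from rfl]
  congr 1
  exact Finset.prod_congr rfl fun i _ => by rw [show a+1+(i+1) = a+1+1+i from by omega]

lemma prod_formula : ∀ n k : ℕ, k ≤ n → f k * qb n k = prodI (n-k) k := by
  intro n
  induction n with
  | zero =>
    intro k hk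
    interval_cases k
    simp [f, prodI]
  | succ n ih =>
    intro k hk
    cases k with
    | zero => simp [f, prodI]
    | succ k =>
      rcases Nat.lt_or_ge k n with hkn | hkn
      · -- k + 1 ≤ n
        obtain ⟨d, rfl⟩ : ∃ d, n = k + 1 + d := ⟨n - k - 1, by omega⟩
        show f (k+1) * qb (k+1+d+1) (k+1) = prodI (k+1+d+1-(k+1)) (k+1)
        rw [qb_pascal1, mul_add, ih (k+1) (by omega),
          show f (k+1) = f k * (1 - q ^ (k+1)) from Finset.prod_range_succ _ _]
        rw [show f k * (1 - q ^ (k+1)) * (q ^ (k+1+d-k) * qb (k+1+d) k)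
            = (1 - q ^ (k+1)) * q ^ (k+1+d-k) * (f k * qb (k+1+d) k) from by ring,
          ih k (by omega)]
        rw [show k+1+d-(k+1) = d from by omega, show k+1+d-k = d+1 from by omega,
          show k+1+d+1-(k+1) = d+1 from by omega]
        -- goal: prodI d (k+1) + (1-q^(k+1)) * q^(d+1) * prodI (d+1) k = prodI (d+1) (k+1)
        rw [prodI_succ' d k, prodI_succ (d+1) k, show d+1+1+k = k+1+d+1 from by omega]
        ring
      · -- k + 1 = n + 1
        have hk1 : k = n := by omega
        subst hk1
        rw [qb_diag, mul_one, Nat.sub_self, prodI_zero_left]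

lemma f_ne_zero (m : ℕ) : f m ≠ 0 := by
  intro h
  have := congrArg (Polynomial.eval 0) h
  rw [f, Polynomial.eval_prod] at this
  simp at this

lemma qb_symm (n k : ℕ) (hk : k ≤ n) : qb n k = qb n (n - k) := by
  have h1 : f k * qb n k * f (n-k) = f n := by
    rw [prod_formula n k hk, mul_comm, ← f_add (n-k) k, show n-k+k = n from by omega]
  have h2 : f (n-k) * qb n (n-k) * f k = f n := by
    rw [prod_formula n (n-k) (by omega), show n-(n-k) = k from by omega, mul_comm,
      ← f_add k (n-k), show k+(n-k) = n from by omega]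
  have h3 : f k * f (n-k) * qb n k = f k * f (n-k) * qb n (n-k) := by
    rw [show f k * f (n-k) * qb n k = f k * qb n k * f (n-k) from by ring, h1,
      show f k * f (n-k) * qb n (n-k) = f (n-k) * qb n (n-k) * f k from by ring, h2]
  exact mul_left_cancel₀ (mul_ne_zero (f_ne_zero k) (f_ne_zero (n-k))) h3


def tri : ℕ → ℕ
  | 0 => 0
  | j+1 => tri j + (j+1)

lemma tri_succ (j : ℕ) : tri (j+1) = tri j + (j+1) := rfl

lemma tri_ge (j : ℕ) : j ≤ tri j := by
  induction j with
  | zero => simp [tri]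
  | succ j ih => rw [tri_succ]; omega

def e (m n : ℕ) : ℕ := if n ≤ m then tri (m-n) else tri (n-m-1)

def c (n m : ℕ) : R := qb (2*n) m * q ^ (e m n)

lemma c_eq_zero {n m : ℕ} (h : 2*n < m) : c n m = 0 := by
  rw [c, qb_eq_zero h, zero_mul]

lemma eA (m n : ℕ) : e m (n+1) + m = e m n + n := by
  rcases Nat.lt_trichotomy m n with h | h | h
  · rw [e, if_neg (by omega), e, if_neg (by omega),
      show n+1-m-1 = (n-m-1)+1 from by omega, tri_succ]
    omega
  · subst h
    rw [e, if_neg (by omega), e, if_pos (le_refl m), show m+1-m-1 = 0 from by omega,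
      Nat.sub_self]
  · rw [e, if_pos (by omega), e, if_pos (by omega),
      show m-n = (m-(n+1))+1 from by omega, tri_succ]
    omega

lemma eB (m n : ℕ) : e (m+1) (n+1) = e m n := by
  rcases le_or_gt n m with h | h
  · rw [e, if_pos (by omega), e, if_pos h, show m+1-(n+1) = m-n from by omega]
  · rw [e, if_neg (by omega), e, if_neg (by omega), show n+1-(m+1)-1 = n-m-1 from by omega]

lemma eC (m n : ℕ) (hm : m ≤ 2*n) : e (m+2) (n+1) + (2*n - m) = e m n + (n+1) := by
  rcases le_or_gt n m with h | h
  · rw [e, if_pos (by omega), e, if_pos h, show m+2-(n+1) = (m-n)+1 from by omega, tri_succ]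
    omega
  · rcases Nat.eq_or_lt_of_le h with h2 | h2
    · rw [e, if_pos (by omega), e, if_neg (by omega), ← h2,
        show m+2-(m+1+1) = 0 from by omega, show m+1-m-1 = 0 from by omega]
      omega
    · rw [e, if_neg (by omega), e, if_neg (by omega),
        show n+1-(m+2)-1 = n-m-2 from by omega, show n-m-1 = (n-m-2)+1 from by omega, tri_succ]
      omega

lemma pq (Z : R) {a b cc d : ℕ} (h : a + b = cc + d) : q^a * (Z * q^b) = q^cc * (Z * q^d) := by
  rw [mul_left_comm, mul_left_comm (q^cc), ← pow_add, ← pow_add, h]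

lemma qb_two_n_one (n : ℕ) : qb (2*n+2) 1 = q * qb (2*n) 1 + (1 + q^(2*n+1)) := by
  rw [qb_one, qb_one, Finset.mul_sum]
  simp only [← pow_succ']
  rw [Finset.sum_range_succ' (fun i => q ^ i) (2*n+1), Finset.sum_range_succ]
  ring

lemma qbKey (n m : ℕ) (hm : m ≤ 2*n) :
    qb (2*n+2) (m+2) = q^(m+2) * qb (2*n) (m+2) + (1 + q^(2*n+1)) * qb (2*n) (m+1)
      + q^(2*n-m) * qb (2*n) m := by
  rcases Nat.eq_or_lt_of_le hm with h2 | h2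
  · subst h2
    rw [qb_diag (2*n+2), qb_eq_zero (show 2*n < 2*n+2 from by omega),
      qb_eq_zero (show 2*n < 2*n+1 from by omega), qb_diag (2*n), Nat.sub_self, pow_zero]
    ring
  · obtain ⟨d, hd⟩ : ∃ d, 2*n = m+1+d := ⟨2*n-m-1, by omega⟩
    rw [show 2*n+2 = (2*n+1)+1 from rfl, qb_pascal2 (2*n+1) (m+1),
      qb_pascal1 (2*n) (m+1), qb_pascal1 (2*n) m, hd,
      show m+1+d-(m+1) = d from by omega, show m+1+d-m = d+1 from by omega,
      show m+1+d+1 = m+2+d from by omega]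
    ring

lemma c0 (n : ℕ) : c (n+1) 0 = q^n * c n 0 := by
  rw [c, c, show 2*(n+1) = 2*n+2 from by omega, qb_zero_right, qb_zero_right, one_mul, one_mul,
    ← pow_add]
  congr 1
  have := eA 0 n
  omega

lemma c1 (n : ℕ) : c (n+1) 1 = q^n * c n 1 + (1 + q^(2*n+1)) * c n 0 := by
  rw [c, c, c, show 2*(n+1) = 2*n+2 from by omega, qb_two_n_one, qb_zero_right, one_mul]
  have h1 : e 1 (n+1) + 1 = e 1 n + n := eA 1 n
  have h2 : e 1 (n+1) = e 0 n := eB 0 n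
  calc (q * qb (2*n) 1 + (1 + q^(2*n+1))) * q ^ (e 1 (n+1))
      = q^1 * (qb (2*n) 1 * q ^ (e 1 (n+1))) + (1 + q^(2*n+1)) * q ^ (e 1 (n+1)) := by ring
    _ = q^n * (qb (2*n) 1 * q ^ (e 1 n)) + (1 + q^(2*n+1)) * q ^ (e 0 n) := by
        rw [pq (qb (2*n) 1) (show 1 + e 1 (n+1) = n + e 1 n from by omega), h2]
    _ = _ := by ring

lemma cm (n m : ℕ) :
    c (n+1) (m+2) = q^n * c n (m+2) + (1 + q^(2*n+1)) * c n (m+1) + q^(n+1) * c n m := by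
  by_cases hm : m ≤ 2*n
  · have h1 := eA (m+2) n
    have h2 := eB (m+1) n
    have h3 := eC m n hm
    rw [c, c, c, c, show 2*(n+1) = 2*n+2 from by omega, qbKey n m hm]
    calc (q^(m+2) * qb (2*n) (m+2) + (1 + q^(2*n+1)) * qb (2*n) (m+1)
            + q^(2*n-m) * qb (2*n) m) * q ^ (e (m+2) (n+1))
        = q^(m+2) * (qb (2*n) (m+2) * q ^ (e (m+2) (n+1)))
          + (1 + q^(2*n+1)) * (qb (2*n) (m+1) * q ^ (e (m+2) (n+1)))
          + q^(2*n-m) * (qb (2*n) m * q ^ (e (m+2) (n+1))) := by ring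
      _ = q^n * (qb (2*n) (m+2) * q ^ (e (m+2) n))
          + (1 + q^(2*n+1)) * (qb (2*n) (m+1) * q ^ (e (m+1) n))
          + q^(n+1) * (qb (2*n) m * q ^ (e m n)) := by
          rw [pq (qb (2*n) (m+2)) (show m+2 + e (m+2) (n+1) = n + e (m+2) n from by omega),
            pq (qb (2*n) m) (show 2*n-m + e (m+2) (n+1) = (n+1) + e m n from by omega), h2]
      _ = _ := by ring
  · rw [c_eq_zero (show 2*(n+1) < m+2 from by omega), c_eq_zero (show 2*n < m+2 from by omega),
      c_eq_zero (show 2*n < m+1 from by omega), c_eq_zero (show 2*n < m from by omega)]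
    ring

lemma coeffSum (N : ℕ) (a : ℕ → R) (m : ℕ) :
    (∑ k ∈ range N, CC (a k) * Y ^ k).coeff m = if m < N then a m else 0 := by
  rw [Polynomial.finset_sum_coeff]
  simp_rw [Polynomial.coeff_C_mul, Polynomial.coeff_X_pow, mul_ite, mul_one, mul_zero]
  rw [Finset.sum_ite_eq (range N) m a]
  simp only [Finset.mem_range]

def S (n : ℕ) : A := ∑ m ∈ range (2*n+1), CC (c n m) * Y ^ m

def L (n : ℕ) : A := (∏ j ∈ range n, (1 + CC (q^(j+1)) * Y)) * (∏ j ∈ range n, (Y + CC (q^j)))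

theorem L_eq_S : ∀ n, L n = S n := by
  intro n
  induction n with
  | zero =>
    rw [L, S]
    simp [c, e, tri]
  | succ n ih =>
    have hL : L (n+1) = L n * ((1 + CC (q^(n+1)) * Y) * (Y + CC (q^n))) := by
      rw [L, L, Finset.prod_range_succ, Finset.prod_range_succ]
      ring
    have hq : q^(n+1) * q^n = q^(2*n+1) := by rw [← pow_add]; congr 1; omega
    have hg : (1 + CC (q^(n+1)) * Y) * (Y + CC (q^n))
        = CC (q^n) * Y^0 + CC (1 + q^(2*n+1)) * Y^1 + CC (q^(n+1)) * Y^2 := by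
      rw [map_add, map_one, ← hq, map_mul]
      ring
    rw [hL, ih, hg]
    apply Polynomial.ext
    intro m
    rw [mul_add, mul_add]
    rw [Polynomial.coeff_add, Polynomial.coeff_add]
    rw [show S n * (CC (q^n) * Y^0) = (S n * CC (q^n)) * Y^0 from by ring,
      show S n * (CC (1 + q^(2*n+1)) * Y^1) = (S n * CC (1 + q^(2*n+1))) * Y^1 from by ring,
      show S n * (CC (q^(n+1)) * Y^2) = (S n * CC (q^(n+1))) * Y^2 from by ring]
    rw [Polynomial.coeff_mul_X_pow', Polynomial.coeff_mul_X_pow', Polynomial.coeff_mul_X_pow']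
    rw [Polynomial.coeff_mul_C, Polynomial.coeff_mul_C, Polynomial.coeff_mul_C]
    rw [S, S]
    rw [coeffSum, coeffSum, coeffSum, coeffSum]
    have hcz : ∀ j, (if j < 2*n+1 then c n j else 0) = c n j := by
      intro j
      split
      · rfl
      · exact (c_eq_zero (by omega)).symm
    have hcz2 : (if m < 2*(n+1)+1 then c (n+1) m else 0) = c (n+1) m := by
      split
      · rfl
      · exact (c_eq_zero (by omega)).symm
    rw [hcz, hcz2]
    match m with
    | 0 =>
      simp only [show ¬(1 ≤ 0) from by omega, show ¬(2 ≤ 0) from by omega, if_neg, if_false,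
        zero_mul, add_zero, Nat.zero_le, if_true, Nat.sub_zero]
      rw [c0]
      ring
    | 1 =>
      simp only [show (1:ℕ) ≤ 1 from le_refl 1, show ¬(2 ≤ 1) from by omega, if_neg, if_true,
        if_false, zero_mul, add_zero, Nat.zero_le, Nat.sub_zero]
      rw [hcz, c1]
      ring
    | (m+2) =>
      simp only [show (1:ℕ) ≤ m+2 from by omega, show (2:ℕ) ≤ m+2 from by omega, if_true,
        Nat.zero_le, Nat.sub_zero, show m+2-1 = m+1 from by omega, show m+2-2 = m from by omega]
      rw [hcz, hcz, cm]
      ring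

def G (n : ℕ) : A :=
  (∏ j ∈ range (n+1), (1 + CC (q^(j+1)) * Y)) * (∏ j ∈ range n, (Y + CC (q^(j+1))))

lemma L_succ_factor (n : ℕ) : L (n+1) = G n * (Y + 1) := by
  rw [L, G, Finset.prod_range_succ' (fun j => (Y + CC (q^j))) n]
  rw [pow_zero, map_one]
  ring

lemma eval_G (n : ℕ) : Polynomial.eval (-1 : R) (G n) = f (n+1) * ((-1)^n * f n) := by
  rw [G, Polynomial.eval_mul, Polynomial.eval_prod, Polynomial.eval_prod]
  congr 1
  · rw [f]
    apply Finset.prod_congr rfl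
    intro j _
    simp [sub_eq_add_neg]
  · have : ∀ j ∈ range n, Polynomial.eval (-1 : R) (Y + CC (q^(j+1))) = -1 * (1 - q^(j+1)) := by
      intro j _
      simp
      try ring
    rw [Finset.prod_congr rfl this, Finset.prod_mul_distrib, Finset.prod_const, f,
      Finset.card_range]

lemma eval_deriv_L (n : ℕ) :
    Polynomial.eval (-1 : R) (Polynomial.derivative (L (n+1))) = Polynomial.eval (-1 : R) (G n) := by
  rw [L_succ_factor, Polynomial.derivative_mul]
  simp

lemma eval_deriv_S (n : ℕ) :
    Polynomial.eval (-1 : R) (Polynomial.derivative (S n))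
      = ∑ m ∈ range (2*n+1), (m : R) * (-1)^(m+1) * c n m := by
  rw [S, Polynomial.derivative_sum, Polynomial.eval_finset_sum]
  apply Finset.sum_congr rfl
  intro m _
  rw [Polynomial.derivative_C_mul, Polynomial.derivative_X_pow]
  cases m with
  | zero => simp
  | succ m =>
    rw [Polynomial.eval_mul, Polynomial.eval_C]
    rw [show (m+1:ℕ)+1 = m+2 from rfl]
    rw [Polynomial.eval_mul, Polynomial.eval_C, Polynomial.eval_pow, Polynomial.eval_X]
    rw [show m+1-1 = m from rfl, show ((-1:R))^(m+2) = (-1)^m from by rw [pow_add]; ring]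
    push_cast
    ring

theorem identity_J (n : ℕ) :
    f (n+1) * ((-1)^n * f n)
      = ∑ m ∈ range (2*(n+1)+1), (m : R) * (-1)^(m+1) * c (n+1) m := by
  have h := congrArg (fun p => Polynomial.eval (-1 : R) (Polynomial.derivative p)) (L_eq_S (n+1))
  rw [eval_deriv_L, eval_G, eval_deriv_S] at h
  exact h
lemma prodI_sub_one (a k : ℕ) : (q^(a+1) : R) ∣ prodI a k - 1 := by
  induction k with
  | zero => simp [prodI]
  | succ k ih =>
    rw [prodI_succ, show prodI a k * (1 - q^(a+1+k)) - 1
      = (prodI a k - 1) - q^(a+1+k) * prodI a k from by ring]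
    exact dvd_sub ih ((pow_dvd_pow q (by omega)).mul_right _)

lemma dvd_mul_sub_one {w : ℕ} {a b : R} (ha : (q^w : R) ∣ a - 1) (hb : (q^w : R) ∣ b - 1) :
    (q^w : R) ∣ a * b - 1 := by
  rw [show a * b - 1 = (a - 1) * b + (b - 1) from by ring]
  exact dvd_add (ha.mul_right b) hb

lemma hu_lemma (n j : ℕ) (hj : j < n+1) :
    (q^(n+1-j) : R) ∣ f (n+1) * qb (2*(n+1)) (n+1+j) - 1 := by
  have hsymm : qb (2*(n+1)) (n+1+j) = qb (2*(n+1)) (n+1-j) := by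
    rw [qb_symm (2*(n+1)) (n+1+j) (by omega), show 2*(n+1)-(n+1+j) = n+1-j from by omega]
  have hsplit : f (n+1) = f (n+1-j) * prodI (n+1-j) j := by
    rw [← f_add (n+1-j) j, show n+1-j+j = n+1 from by omega]
  have hpf : f (n+1-j) * qb (2*(n+1)) (n+1-j) = prodI (n+1+j) (n+1-j) := by
    rw [prod_formula (2*(n+1)) (n+1-j) (by omega), show 2*(n+1)-(n+1-j) = n+1+j from by omega]
  rw [hsymm, hsplit, show f (n+1-j) * prodI (n+1-j) j * qb (2*(n+1)) (n+1-j)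
    = prodI (n+1-j) j * (f (n+1-j) * qb (2*(n+1)) (n+1-j)) from by ring, hpf]
  apply dvd_mul_sub_one
  · exact dvd_trans (pow_dvd_pow q (by omega)) (prodI_sub_one (n+1-j) j)
  · exact dvd_trans (pow_dvd_pow q (by omega)) (prodI_sub_one (n+1+j) (n+1-j))

lemma hv_lemma (n j : ℕ) (hj : j < n+1) :
    (q^(n+1-j) : R) ∣ f (n+1) * qb (2*(n+1)) (n-j) - 1 := by
  have hsplit : f (n+1) = f (n-j) * prodI (n-j) (j+1) := by
    rw [← f_add (n-j) (j+1), show n-j+(j+1) = n+1 from by omega]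
  have hpf : f (n-j) * qb (2*(n+1)) (n-j) = prodI (n+2+j) (n-j) := by
    rw [prod_formula (2*(n+1)) (n-j) (by omega), show 2*(n+1)-(n-j) = n+2+j from by omega]
  rw [hsplit, show f (n-j) * prodI (n-j) (j+1) * qb (2*(n+1)) (n-j)
    = prodI (n-j) (j+1) * (f (n-j) * qb (2*(n+1)) (n-j)) from by ring, hpf]
  apply dvd_mul_sub_one
  · exact dvd_trans (pow_dvd_pow q (by omega)) (prodI_sub_one (n-j) (j+1))
  · exact dvd_trans (pow_dvd_pow q (by omega)) (prodI_sub_one (n+2+j) (n-j))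

theorem jacobi_trunc (N : ℕ) :
    (q^N : R) ∣ f N ^ 3 - ∑ j ∈ range N, (-1)^j * ((2*j+1 : ℕ) : R) * q^(tri j) := by
  match N with
  | 0 => simp
  | (n+1) =>
    have h1 : (-1:R)^n * (-1)^n = 1 := by
      rw [← pow_add, ← two_mul, pow_mul]; norm_num
    have hJ : f (n+1)^2 * f n
        = ∑ m ∈ range (2*(n+1)+1), (m:R) * (-1)^(m+n+1) * (f (n+1) * c (n+1) m) := by
      have h0 := identity_J n
      calc f (n+1)^2 * f n
          = ((-1)^n * f (n+1)) * (f (n+1) * ((-1)^n * f n)) := by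
            rw [show ((-1:R)^n * f (n+1)) * (f (n+1) * ((-1)^n * f n))
              = ((-1)^n*(-1)^n) * (f (n+1)^2 * f n) from by ring, h1, one_mul]
        _ = ((-1)^n * f (n+1)) * (∑ m ∈ range (2*(n+1)+1), (m:R)*(-1)^(m+1) * c (n+1) m) := by
            rw [h0]
        _ = _ := by
            rw [Finset.mul_sum]
            apply Finset.sum_congr rfl
            intro m _
            rw [show m+n+1 = n+(m+1) from by omega, pow_add]
            ring
    have hf3 : (q^(n+1) : R) ∣ f (n+1)^3 - f (n+1)^2 * f n := by
      have hfs : f (n+1) = f n * (1 - q^(n+1)) := Finset.prod_range_succ _ _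
      refine ⟨-((f n * (1 - q^(n+1)))^2 * f n), ?_⟩
      rw [show f (n+1)^3 - f (n+1)^2 * f n = f (n+1)^2 * (f (n+1) - f n) from by ring, hfs]
      ring
    -- per-pair divisibility
    have per : ∀ j ∈ range (n+1), (q^(n+1) : R) ∣
        (((n-j : ℕ):R) * (-1)^((n-j)+n+1) * (f (n+1) * c (n+1) (n-j))
          + ((n+1+j : ℕ):R) * (-1)^((n+1+j)+n+1) * (f (n+1) * c (n+1) (n+1+j)))
          - (-1)^j * ((2*j+1 : ℕ) : R) * q^(tri j) := by
      intro j hj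
      rw [Finset.mem_range] at hj
      obtain ⟨d, hd⟩ : ∃ d, n = j + d := ⟨n - j, by omega⟩
      have s1 : ((-1:R))^((n+1+j)+n+1) = (-1)^j := by
        rw [show (n+1+j)+n+1 = j+2*(n+1) from by omega, pow_add, pow_mul]
        norm_num
      have s2 : ((-1:R))^((n-j)+n+1) = -((-1:R)^j) := by
        rw [show (n-j)+n+1 = (j+1)+2*d from by omega, pow_add, pow_mul]
        norm_num
        rw [pow_succ]
        ring
      have he1 : e (n+1+j) (n+1) = tri j := by
        rw [e, if_pos (by omega)]; congr 1; omega
      have he2 : e (n-j) (n+1) = tri j := by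
        rw [e, if_neg (by omega)]; congr 1; omega
      obtain ⟨w1, hw1⟩ := hu_lemma n j hj
      obtain ⟨w2, hw2⟩ := hv_lemma n j hj
      have hu' : f (n+1) * qb (2*(n+1)) (n+1+j) = 1 + q^(n+1-j) * w1 := by
        rw [← hw1]; ring
      have hv' : f (n+1) * qb (2*(n+1)) (n-j) = 1 + q^(n+1-j) * w2 := by
        rw [← hw2]; ring
      rw [c, c, he1, he2, show 2*(n+1) = 2*n+2 from by omega] at *
      rw [show f (n+1) * (qb (2*n+2) (n-j) * q^(tri j)) = (f (n+1) * qb (2*n+2) (n-j)) * q^(tri j)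
          from by ring,
        show f (n+1) * (qb (2*n+2) (n+1+j) * q^(tri j)) = (f (n+1) * qb (2*n+2) (n+1+j)) * q^(tri j)
          from by ring, hu', hv', s1, s2]
      have hcast : ((n+1+j : ℕ):R) - ((n-j : ℕ):R) = ((2*j+1 : ℕ) : R) := by
        push_cast [Nat.cast_sub (show j ≤ n from by omega)]
        ring
      refine dvd_trans (pow_dvd_pow q (show n+1 ≤ tri j + (n+1-j) from by
        have := tri_ge j; omega)) ⟨(-1)^j * (((n+1+j:ℕ):R) * w1 - ((n-j:ℕ):R) * w2), ?_⟩
      rw [pow_add]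
      have expand : ((n-j : ℕ):R) * (-((-1:R)^j)) * ((1 + q^(n+1-j) * w2) * q^(tri j))
            + ((n+1+j : ℕ):R) * ((-1)^j) * ((1 + q^(n+1-j) * w1) * q^(tri j))
            - (-1)^j * ((2*j+1 : ℕ) : R) * q^(tri j)
          = (-1)^j * q^(tri j) * ((((n+1+j:ℕ):R) - ((n-j:ℕ):R)) - ((2*j+1:ℕ):R))
            + q^(tri j) * q^(n+1-j) * ((-1)^j * (((n+1+j:ℕ):R) * w1 - ((n-j:ℕ):R) * w2)) := by
        ring
      rw [expand, hcast, sub_self, mul_zero, zero_add]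
    -- assemble the sum
    have hsum : (q^(n+1) : R) ∣
        (∑ m ∈ range (2*(n+1)+1), (m:R) * (-1)^(m+n+1) * (f (n+1) * c (n+1) m))
          - ∑ j ∈ range (n+1), (-1)^j * ((2*j+1 : ℕ) : R) * q^(tri j) := by
      rw [Finset.sum_range_succ (fun m => (m:R) * (-1)^(m+n+1) * (f (n+1) * c (n+1) m)) (2*(n+1))]
      rw [show 2*(n+1) = (n+1)+(n+1) from by omega]
      rw [Finset.sum_range_add (fun m => (m:R) * (-1)^(m+n+1) * (f (n+1) * c (n+1) m)) (n+1) (n+1)]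
      rw [← Finset.sum_range_reflect
        (fun m => (m:R) * (-1)^(m+n+1) * (f (n+1) * c (n+1) m)) (n+1)]
      have step : (∑ j ∈ range (n+1), ((n+1-1-j:ℕ):R) * (-1)^((n+1-1-j)+n+1)
              * (f (n+1) * c (n+1) (n+1-1-j)))
            + (∑ j ∈ range (n+1), ((n+1+j:ℕ):R) * (-1)^((n+1+j)+n+1)
              * (f (n+1) * c (n+1) (n+1+j)))
            + ((n+1+(n+1):ℕ):R) * (-1)^((n+1+(n+1))+n+1) * (f (n+1) * c (n+1) (n+1+(n+1)))
            - ∑ j ∈ range (n+1), (-1)^j * ((2*j+1 : ℕ) : R) * q^(tri j)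
          = (∑ j ∈ range (n+1),
              ((((n-j:ℕ):R) * (-1)^((n-j)+n+1) * (f (n+1) * c (n+1) (n-j))
                + ((n+1+j:ℕ):R) * (-1)^((n+1+j)+n+1) * (f (n+1) * c (n+1) (n+1+j)))
                - (-1)^j * ((2*j+1 : ℕ) : R) * q^(tri j)))
            + ((n+1+(n+1):ℕ):R) * (-1)^((n+1+(n+1))+n+1) * (f (n+1) * c (n+1) (n+1+(n+1))) := by
        rw [Finset.sum_sub_distrib, Finset.sum_add_distrib]
        have : ∀ j ∈ range (n+1), ((n+1-1-j:ℕ):R) * (-1)^((n+1-1-j)+n+1)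
            * (f (n+1) * c (n+1) (n+1-1-j))
            = ((n-j:ℕ):R) * (-1)^((n-j)+n+1) * (f (n+1) * c (n+1) (n-j)) := by
          intro j _
          rw [show n+1-1-j = n-j from by omega]
        rw [Finset.sum_congr rfl this]
        ring
      rw [step]
      apply dvd_add
      · exact Finset.dvd_sum per
      · have hc : c (n+1) (n+1+(n+1)) = q^(tri (n+1)) := by
          rw [c, show 2*(n+1) = n+1+(n+1) from by omega, qb_diag, one_mul, e,
            if_pos (show n+1 ≤ n+1+(n+1) from by omega),
            show n+1+(n+1)-(n+1) = n+1 from by omega]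
        rw [hc]
        have h' : (q^(n+1) : R) ∣ q^(tri (n+1)) := pow_dvd_pow q (tri_ge (n+1))
        exact Dvd.dvd.mul_left (Dvd.dvd.mul_left h' (f (n+1))) _
    have final := dvd_add hf3 (hJ ▸ hsum)
    rw [show f (n+1)^3 - f (n+1)^2 * f n + (f (n+1)^2 * f n
      - ∑ j ∈ range (n+1), (-1)^j * ((2*j+1 : ℕ) : R) * q^(tri j))
      = f (n+1)^3 - ∑ j ∈ range (n+1), (-1)^j * ((2*j+1 : ℕ) : R) * q^(tri j) from by ring] at final
    exact final
end
end RamaJacobi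

/-- The partition function: `partition n` counts the partitions of `n`. -/
def partition (n : ℕ) : ℕ := Fintype.card (Nat.Partition n)


open PowerSeries

namespace Theorems100

noncomputable section

variable {α : Type*}

open Finset

open scoped Classical

/-- The partial product for the generating function for odd partitions.
TODO: As `m` tends to infinity, this converges (in the `X`-adic topology).

If `m` is sufficiently large, the `i`th coefficient gives the number of odd partitions of the
natural number `i`: proved in `oddGF_prop`.
It is stated for an arbitrary field `α`, though it usually suffices to use `ℚ` or `ℝ`.
-/
def partialOddGF (m : ℕ) [Field α] :=
  ∏ i ∈ range m, (1 - (X : PowerSeries α) ^ (2 * i + 1))⁻¹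

/-- The partial product for the generating function for distinct partitions.
TODO: As `m` tends to infinity, this converges (in the `X`-adic topology).

If `m` is sufficiently large, the `i`th coefficient gives the number of distinct partitions of the
natural number `i`: proved in `distinctGF_prop`.
It is stated for an arbitrary commutative semiring `α`, though it usually suffices to use `ℕ`, `ℚ`
or `ℝ`.
-/
def partialDistinctGF (m : ℕ) [CommSemiring α] :=
  ∏ i ∈ range m, (1 + (X : PowerSeries α) ^ (i + 1))

open Finset.HasAntidiagonal

universe u
variable {ι : Type u}

/-- A convenience constructor for the power series whose coefficients indicate a subset. -/
def indicatorSeries (α : Type*) [Semiring α] (s : Set ℕ) : PowerSeries α :=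
  PowerSeries.mk fun n => if n ∈ s then 1 else 0

theorem coeff_indicator (s : Set ℕ) [Semiring α] (n : ℕ) :
    coeff n (indicatorSeries α s) = if n ∈ s then 1 else 0 :=
  coeff_mk _ _

theorem coeff_indicator_pos (s : Set ℕ) [Semiring α] (n : ℕ) (h : n ∈ s) :
    coeff n (indicatorSeries α s) = 1 := by rw [coeff_indicator, if_pos h]

theorem coeff_indicator_neg (s : Set ℕ) [Semiring α] (n : ℕ) (h : n ∉ s) :
    coeff n (indicatorSeries α s) = 0 := by rw [coeff_indicator, if_neg h]

theorem constantCoeff_indicator (s : Set ℕ) [Semiring α] :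
    constantCoeff (indicatorSeries α s) = if 0 ∈ s then 1 else 0 :=
  rfl

theorem two_series (i : ℕ) [Semiring α] :
    1 + (X : PowerSeries α) ^ i.succ = indicatorSeries α {0, i.succ} := by
  ext n
  simp only [coeff_indicator, coeff_one, coeff_X_pow, Set.mem_insert_iff, Set.mem_singleton_iff,
    map_add]
  cases' n with d
  · simp [(Nat.succ_ne_zero i).symm]
  · simp [Nat.succ_ne_zero d]

theorem num_series' [Field α] (i : ℕ) :
    (1 - (X : PowerSeries α) ^ (i + 1))⁻¹ = indicatorSeries α {k | i + 1 ∣ k} := by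
  rw [PowerSeries.inv_eq_iff_mul_eq_one]
  · ext n
    cases n with
    | zero => simp [mul_sub, zero_pow, constantCoeff_indicator]
    | succ n =>
      simp only [coeff_one, if_false, mul_sub, mul_one, coeff_indicator,
        LinearMap.map_sub, reduceCtorEq]
      simp_rw [coeff_mul, coeff_X_pow, coeff_indicator, @boole_mul _ _ _ _]
      erw [@sum_ite _ _ _ _ _ (fun _ => Classical.propDecidable _), sum_ite]
      simp_rw [@filter_filter _ _ _ _ _, sum_const_zero, add_zero, sum_const, nsmul_eq_mul, mul_one,
        sub_eq_iff_eq_add, zero_add]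
      symm
      split_ifs with h
      · suffices #{a ∈ antidiagonal (n + 1) | i + 1 ∣ a.fst ∧ a.snd = i + 1} = 1 by
          simp only [Set.mem_setOf_eq]; convert congr_arg ((↑) : ℕ → α) this; norm_cast
        rw [card_eq_one]
        cases' h with p hp
        refine ⟨((i + 1) * (p - 1), i + 1), ?_⟩
        ext ⟨a₁, a₂⟩
        simp only [mem_filter, Prod.mk_inj, HasAntidiagonal.mem_antidiagonal, mem_singleton]
        constructor
        · rintro ⟨a_left, ⟨a, rfl⟩, rfl⟩
          refine ⟨?_, rfl⟩
          rw [Nat.mul_sub_left_distrib, ← hp, ← a_left, mul_one, Nat.add_sub_cancel]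
        · rintro ⟨rfl, rfl⟩
          match p with
          | 0 => rw [mul_zero] at hp; cases hp
          | p + 1 => rw [hp]; simp [mul_add]
      · suffices #{a ∈ antidiagonal (n + 1) | i + 1 ∣ a.fst ∧ a.snd = i + 1} = 0 by
          simp only [Set.mem_setOf_eq]; convert congr_arg ((↑) : ℕ → α) this; norm_cast
        rw [card_eq_zero]
        apply eq_empty_of_forall_notMem
        simp only [Prod.forall, mem_filter, not_and, HasAntidiagonal.mem_antidiagonal]
        rintro _ h₁ h₂ ⟨a, rfl⟩ rfl
        apply h
        simp [← h₂]
  · simp [zero_pow]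

def mkOdd : ℕ ↪ ℕ :=
  ⟨fun i => 2 * i + 1, fun x y h => by linarith⟩

-- The main workhorse of the partition theorem proof.
theorem partialGF_prop (α : Type*) [CommSemiring α] (n : ℕ) (s : Finset ℕ) (hs : ∀ i ∈ s, 0 < i)
    (c : ℕ → Set ℕ) (hc : ∀ i, i ∉ s → 0 ∈ c i) :
    #{p : n.Partition | (∀ j, p.parts.count j ∈ c j) ∧ ∀ j ∈ p.parts, j ∈ s} =
      coeff n (∏ i ∈ s, indicatorSeries α ((· * i) '' c i)) := by
  simp_rw [coeff_prod, coeff_indicator, prod_boole, sum_boole]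
  apply congr_arg
  simp only [mem_univ, forall_true_left, not_and, not_forall, exists_prop,
    Set.mem_image, not_exists]
  set φ : (a : Nat.Partition n) →
    a ∈ filter (fun p ↦ (∀ (j : ℕ), Multiset.count j p.parts ∈ c j) ∧ ∀ j ∈ p.parts, j ∈ s) univ →
    ℕ →₀ ℕ := fun p _ => {
      toFun := fun i => Multiset.count i p.parts • i
      support := Finset.filter (fun i => i ≠ 0) p.parts.toFinset
      mem_support_toFun := fun a => by
        simp only [smul_eq_mul, ne_eq, mul_eq_zero, Multiset.count_eq_zero]
        rw [not_or, not_not]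
        simp only [Multiset.mem_toFinset, not_not, mem_filter] }
  refine Finset.card_bij φ ?_ ?_ ?_
  · intro a ha
    simp only [φ, not_forall, not_exists, not_and, exists_prop, mem_filter]
    rw [mem_finsuppAntidiag]
    dsimp only [ne_eq, smul_eq_mul, id_eq, eq_mpr_eq_cast, le_eq_subset, Finsupp.coe_mk]
    simp only [mem_univ, forall_true_left, not_and, not_forall, exists_prop,
      mem_filter, true_and] at ha
    refine ⟨⟨?_, fun i ↦ ?_⟩, fun i _ ↦ ⟨a.parts.count i, ha.1 i, rfl⟩⟩
    · conv_rhs => simp [← a.parts_sum]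
      rw [sum_multiset_count_of_subset _ s]
      · simp only [smul_eq_mul]
      · intro i
        simp only [Multiset.mem_toFinset, not_not, mem_filter]
        apply ha.2
    · simp only [ne_eq, Multiset.mem_toFinset, not_not, mem_filter, and_imp]
      exact fun hi _ ↦ ha.2 i hi
  · intro p₁ hp₁ p₂ hp₂ h
    apply Nat.Partition.ext
    simp only [true_and, mem_univ, mem_filter] at hp₁ hp₂
    ext i
    simp only [φ, ne_eq, Multiset.mem_toFinset, not_not, smul_eq_mul, Finsupp.mk.injEq] at h
    by_cases hi : i = 0
    · rw [hi]
      rw [Multiset.count_eq_zero_of_notMem]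
      · rw [Multiset.count_eq_zero_of_notMem]
        intro a; exact Nat.lt_irrefl 0 (hs 0 (hp₂.2 0 a))
      intro a; exact Nat.lt_irrefl 0 (hs 0 (hp₁.2 0 a))
    · rw [← mul_left_inj' hi]
      rw [funext_iff] at h
      exact h.2 i
  · simp only [φ, mem_filter, mem_finsuppAntidiag, mem_univ, exists_prop, true_and, and_assoc]
    rintro f ⟨hf, hf₃, hf₄⟩
    have hf' : f ∈ finsuppAntidiag s n := mem_finsuppAntidiag.mpr ⟨hf, hf₃⟩
    simp only [mem_finsuppAntidiag] at hf'
    refine ⟨⟨∑ i ∈ s, Multiset.replicate (f i / i) i, ?_, ?_⟩, ?_, ?_, ?_⟩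
    · intro i hi
      simp only [exists_prop, Multiset.mem_sum, mem_map, Function.Embedding.coeFn_mk] at hi
      rcases hi with ⟨t, ht, z⟩
      apply hs
      rwa [Multiset.eq_of_mem_replicate z]
    · simp_rw [Multiset.sum_sum, Multiset.sum_replicate, Nat.nsmul_eq_mul]
      rw [← hf'.1]
      refine sum_congr rfl fun i hi => Nat.div_mul_cancel ?_
      rcases hf₄ i hi with ⟨w, _, hw₂⟩
      rw [← hw₂]
      exact dvd_mul_left _ _
    · intro i
      simp_rw [Multiset.count_sum', Multiset.count_replicate, sum_ite_eq']
      split_ifs with h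
      · rcases hf₄ i h with ⟨w, hw₁, hw₂⟩
        rwa [← hw₂, Nat.mul_div_cancel _ (hs i h)]
      · exact hc _ h
    · intro i hi
      rw [Multiset.mem_sum] at hi
      rcases hi with ⟨j, hj₁, hj₂⟩
      rwa [Multiset.eq_of_mem_replicate hj₂]
    · ext i
      simp_rw [Multiset.count_sum', Multiset.count_replicate, sum_ite_eq']
      simp only [ne_eq, Multiset.mem_toFinset, not_not, smul_eq_mul, ite_mul,
        zero_mul, Finsupp.coe_mk]
      split_ifs with h
      · apply Nat.div_mul_cancel
        rcases hf₄ i h with ⟨w, _, hw₂⟩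
        apply Dvd.intro_left _ hw₂
      · apply symm
        rw [← Finsupp.notMem_support_iff]
        exact notMem_mono hf'.2 h


theorem partition_coeff {K : Type*} [Field K] (n M : ℕ) (h : n ≤ M) :
    (partition n : K) = coeff n (∏ i ∈ range M, (1 - (X : PowerSeries K) ^ (i + 1))⁻¹) := by
  have hs : ∀ i ∈ (range M).map ⟨Nat.succ, Nat.succ_injective⟩, 0 < i := by
    intro i hi; simp only [Finset.mem_map, Function.Embedding.coeFn_mk] at hi
    obtain ⟨j, -, rfl⟩ := hi; exact Nat.succ_pos j
  have key := partialGF_prop K n ((range M).map ⟨Nat.succ, Nat.succ_injective⟩) hs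
    (fun _ => Set.univ) (fun _ _ => trivial)
  rw [Finset.prod_map] at key
  have h2 : ∀ i : ℕ, indicatorSeries K ((· * Nat.succ i) '' Set.univ)
      = (1 - (X : PowerSeries K) ^ (i + 1))⁻¹ := by
    intro i
    have hset : ((· * Nat.succ i) '' Set.univ) = {k | i + 1 ∣ k} := by
      ext k
      constructor
      · rintro ⟨j, -, rfl⟩; exact ⟨j, (mul_comm j _)⟩
      · rintro ⟨j, rfl⟩; exact ⟨j, Set.mem_univ j, mul_comm _ _⟩
    rw [hset, num_series']
  simp only [Function.Embedding.coeFn_mk, h2] at key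
  rw [← key]
  congr 1
  rw [partition, ← Finset.card_univ]
  congr 1
  symm
  rw [Finset.eq_univ_iff_forall]
  intro p
  simp only [mem_filter, mem_univ, true_and, Set.mem_univ, implies_true, true_and]
  intro j hj
  simp only [Finset.mem_map, Finset.mem_range, Function.Embedding.coeFn_mk]
  have hj1 : 0 < j := p.parts_pos hj
  have hj2 : j ≤ n := by
    have := p.parts_sum
    exact this ▸ Multiset.le_sum_of_mem (by exact_mod_cast hj)
  exact ⟨j - 1, by omega, by omega⟩

end
end Theorems100

namespace RamaFinal
open Finset PowerSeries RamaJacobi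

noncomputable section

local notation "K" => ZMod 7

instance fact7 : Fact (Nat.Prime 7) := ⟨by norm_num⟩

instance charP7 : CharP (PowerSeries K) 7 :=
  charP_of_injective_ringHom PowerSeries.C_injective 7

def F (M : ℕ) : PowerSeries K := ∏ i ∈ range M, (1 - (X : PowerSeries K)^(i+1))

def Gp (M : ℕ) : PowerSeries K := ∏ i ∈ range M, (1 - (X : PowerSeries K)^(i+1))⁻¹

def G7 (M : ℕ) : PowerSeries K := ∏ i ∈ range M, (1 - (X : PowerSeries K)^(7*(i+1)))

lemma F_mul_Gp (M : ℕ) : F M * Gp M = 1 := by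
  rw [F, Gp, ← Finset.prod_mul_distrib]
  apply Finset.prod_eq_one
  intro i _
  apply PowerSeries.mul_inv_cancel
  simp

lemma F_pow7 (M : ℕ) : F M ^ 7 = G7 M := by
  rw [F, G7, ← Finset.prod_pow]
  apply Finset.prod_congr rfl
  intro i _
  rw [sub_pow_char, one_pow, ← pow_mul, show (i+1)*7 = 7*(i+1) from by omega]

/-- The ring hom from ℤ[q] into (ZMod 7)⟦X⟧. -/
def Φ : Polynomial ℤ →+* PowerSeries K :=
  (Polynomial.coeToPowerSeries.ringHom).comp (Polynomial.mapRingHom (Int.castRingHom K))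

lemma Φ_X : Φ (Polynomial.X) = (X : PowerSeries K) := by
  simp [Φ]

lemma Φ_f (M : ℕ) : Φ (RamaJacobi.f M) = F M := by
  rw [RamaJacobi.f, map_prod, F]
  apply Finset.prod_congr rfl
  intro i _
  rw [map_sub, map_one, map_pow, Φ_X]

lemma jac_transfer (M : ℕ) :
    ((X : PowerSeries K)^M) ∣
      F M ^ 3 - ∑ j ∈ range M, (-1)^j * ((2*j+1:ℕ) : PowerSeries K) * X^(tri j) := by
  have h := map_dvd Φ (jacobi_trunc M)
  rw [map_sub, map_pow, map_pow, map_sum, Φ_X, Φ_f] at h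
  convert h using 3 with j hj
  rw [map_mul, map_mul, map_pow, map_neg, map_one, map_natCast, map_pow, Φ_X]

lemma coeff_F3 (M d : ℕ) (hd : d < M) :
    (PowerSeries.coeff d) (F M ^ 3)
      = ∑ j ∈ range M, (if d = tri j then (-1)^j * ((2*j+1:ℕ) : K) else 0) := by
  have h := (PowerSeries.X_pow_dvd_iff.mp (jac_transfer M)) d hd
  rw [map_sub, sub_eq_zero] at h
  rw [h, map_sum]
  apply Finset.sum_congr rfl
  intro j _
  have hC : ((-1 : PowerSeries K)^j * ((2*j+1:ℕ) : PowerSeries K))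
      = PowerSeries.C ((-1)^j * ((2*j+1:ℕ) : K)) := by
    rw [map_mul, map_pow, map_neg, map_one, map_natCast]
  rw [hC, PowerSeries.coeff_C_mul, PowerSeries.coeff_X_pow]
  simp [mul_ite]

lemma tri_two (m : ℕ) : 2 * tri m = m * (m+1) := by
  induction m with
  | zero => rfl
  | succ m ih => rw [tri_succ, Nat.mul_add, ih]; ring

lemma tri_mod7 {j k u v : ℕ} (huv : (u + v) % 7 = 5) (hu : u = tri j) (hv : v = tri k) :
    ((2*j+1 : ℕ) : K) * ((2*k+1 : ℕ) : K) = 0 := by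
  have h2 : ∀ m : ℕ, (2 : K) * ((tri m : ℕ) : K) = (m : K) * ((m : K) + 1) := by
    intro m
    have := tri_two m
    have hcast : ((2 * tri m : ℕ) : K) = ((m * (m+1) : ℕ) : K) := by rw [this]
    push_cast at hcast
    push_cast
    linear_combination hcast
  have hcast5 : ((u + v : ℕ) : K) = 5 := by
    rw [show u + v = 5 + 7*((u+v)/7) from by omega]
    push_cast
    have h70 : (7 : K) = 0 := by decide
    rw [h70]
    ring
  have key : ∀ x y : K, x*(x+1) + y*(y+1) = 3 → (2*x+1)*(2*y+1) = 0 := by decide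
  have hsum : (j:K)*((j:K)+1) + (k:K)*((k:K)+1) = 3 := by
    have e1 := h2 j
    have e2 := h2 k
    rw [← hu] at e1
    rw [← hv] at e2
    have : ((u:K) + (v:K)) = 5 := by push_cast at hcast5 ⊢; exact hcast5
    calc (j:K)*((j:K)+1) + (k:K)*((k:K)+1) = 2*((u:K) + (v:K)) := by
          rw [← e1, ← e2]; ring
      _ = 2 * 5 := by rw [this]
      _ = 3 := by decide
  have := key (j:K) (k:K) hsum
  push_cast
  linear_combination this

/-- supported on multiples of 7 -/
def S7 (φ : PowerSeries K) : Prop := ∀ d : ℕ, ¬ (7 ∣ d) → PowerSeries.coeff d φ = 0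

lemma S7_mul {a b : PowerSeries K} (ha : S7 a) (hb : S7 b) : S7 (a * b) := by
  intro d hd
  rw [PowerSeries.coeff_mul]
  apply Finset.sum_eq_zero
  intro p hp
  rw [Finset.HasAntidiagonal.mem_antidiagonal] at hp
  by_cases h7 : 7 ∣ p.1
  · rw [hb p.2 (by omega), mul_zero]
  · rw [ha p.1 h7, zero_mul]

lemma S7_G7 (M : ℕ) : S7 (G7 M) := by
  rw [G7]
  induction M with
  | zero =>
    intro d hd
    rw [Finset.range_zero, Finset.prod_empty]
    rw [PowerSeries.coeff_one]
    simp only [if_neg (show d ≠ 0 from fun h => hd (h ▸ dvd_zero 7))]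
  | succ M ih =>
    rw [Finset.prod_range_succ]
    apply S7_mul ih
    intro d hd
    rw [map_sub, PowerSeries.coeff_one, PowerSeries.coeff_X_pow]
    rw [if_neg (show d ≠ 0 from fun h => hd (h ▸ dvd_zero 7)),
      if_neg (show d ≠ 7*(M+1) from fun h => hd (h ▸ Dvd.intro _ rfl))]
    ring

lemma S7_inv (φ ψ : PowerSeries K) (h : S7 φ) (h0 : PowerSeries.constantCoeff φ = 1)
    (hψ : φ * ψ = 1) : S7 ψ := by
  intro d
  induction d using Nat.strong_induction_on with
  | _ d ih =>
    intro hd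
    have hco := congrArg (PowerSeries.coeff d) hψ
    rw [PowerSeries.coeff_mul, Finset.Nat.sum_antidiagonal_eq_sum_range_succ_mk,
      Finset.sum_range_succ'] at hco
    have hone : PowerSeries.coeff d (1 : PowerSeries K) = 0 := by
      rw [PowerSeries.coeff_one, if_neg (show d ≠ 0 from fun h => hd (h ▸ dvd_zero 7))]
    rw [hone] at hco
    have hzero : ∀ i ∈ range d,
        PowerSeries.coeff (i+1) φ * PowerSeries.coeff (d-(i+1)) ψ = 0 := by
      intro i hi
      rw [Finset.mem_range] at hi
      by_cases h7 : 7 ∣ (i+1)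
      · rw [ih (d-(i+1)) (by omega) (by omega), mul_zero]
      · rw [h (i+1) h7, zero_mul]
    rw [Finset.sum_eq_zero hzero, zero_add] at hco
    have hc0 : PowerSeries.coeff 0 φ = 1 := by
      rw [PowerSeries.coeff_zero_eq_constantCoeff, h0]
    rw [hc0, one_mul, Nat.sub_zero] at hco
    exact hco

theorem main (n : ℕ) : partition (7 * n + 5) ≡ 0 [MOD 7] := by
  set D := 7*n+5 with hD
  set M := D+1 with hM
  have hFG : F M * Gp M = 1 := F_mul_Gp M
  have hG7H : G7 M * (Gp M)^7 = 1 := by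
    rw [← F_pow7, ← mul_pow, hFG, one_pow]
  have hGpEq : Gp M = F M ^ 6 * (Gp M)^7 := by
    have : F M ^ 6 * (Gp M)^7 = (F M * Gp M)^6 * Gp M := by ring
    rw [this, hFG, one_pow, one_mul]
  have hS7H : S7 ((Gp M)^7) := by
    apply S7_inv (G7 M) _ (S7_G7 M) _ hG7H
    rw [G7, map_prod]
    apply Finset.prod_eq_one
    intro i _
    simp
  have hpc : ((partition D : K)) = PowerSeries.coeff D (Gp M) :=
    Theorems100.partition_coeff D M (by omega)
  have hzero : PowerSeries.coeff D (Gp M) = 0 := by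
    rw [hGpEq, PowerSeries.coeff_mul]
    apply Finset.sum_eq_zero
    intro p hp
    rw [Finset.HasAntidiagonal.mem_antidiagonal] at hp
    by_cases h7 : 7 ∣ p.2
    · -- then p.1 % 7 = 5
      have hp1 : p.1 % 7 = 5 := by omega
      have hF6 : PowerSeries.coeff p.1 (F M ^ 6) = 0 := by
        rw [show (6:ℕ) = 3 * 2 from rfl, pow_mul, sq, PowerSeries.coeff_mul]
        apply Finset.sum_eq_zero
        intro r hr
        rw [Finset.HasAntidiagonal.mem_antidiagonal] at hr
        rw [coeff_F3 M r.1 (by omega), coeff_F3 M r.2 (by omega), Finset.sum_mul_sum]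
        apply Finset.sum_eq_zero
        intro j _
        apply Finset.sum_eq_zero
        intro k _
        by_cases h1 : r.1 = tri j
        · by_cases h2 : r.2 = tri k
          · rw [if_pos h1, if_pos h2]
            have hz := tri_mod7 (by omega : (r.1 + r.2) % 7 = 5) h1 h2
            calc ((-1:K))^j * ((2*j+1:ℕ) : K) * ((-1)^k * ((2*k+1:ℕ) : K))
                = ((-1:K))^j * (-1)^k * (((2*j+1:ℕ) : K) * ((2*k+1:ℕ) : K)) := by ring
              _ = 0 := by rw [hz, mul_zero]
          · rw [if_neg h2, mul_zero]
        · rw [if_neg h1, zero_mul]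
      rw [hF6, zero_mul]
    · rw [hS7H p.2 h7, mul_zero]
  have hfin : (partition D : K) = 0 := by rw [hpc, hzero]
  have hdvd : (7:ℕ) ∣ partition D := by
    rwa [ZMod.natCast_eq_zero_iff] at hfin
  exact (Nat.modEq_zero_iff_dvd).mpr hdvd

end
end RamaFinal

/-- Ramanujan's congruence modulo 7. -/
theorem ramanujan_congruence_seven (n : ℕ) : partition (7 * n + 5) ≡ 0 [MOD 7] := by
  exact RamaFinal.main n
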